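/- Let n ≥ 1, let c, d : ℝ → ℝ³ be differentiable curves and Λ, M ∈ ℝ constants with Λ ≠ M, such that c(u) + ((Λ − u)/n)·c'(u) = d(u) + ((M − u)/n)·d'(u) for all u. Define r(u) = c(u) + ((u − M)/(Λ − M))·(d(u) − c(u)). Then r'(u) = ((n+1)/(Λ − M))·(d(u) − c(u)) for all u. -/
import Mathlib


/-- for a developable patch with constant `Λ ≠ M`, the edge of
regression `r(u) = c(u) + ((u−M)/(Λ−M))·(d(u)−c(u))` has velocity
`r'(u) = ((n+1)/(Λ−M))·(d(u)−c(u))`. -/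
theorem edge_of_regression_constant_case
    (n : ℕ) (hn : 1 ≤ n) (c d : ℝ → Fin 3 → ℝ)
    (hc : Differentiable ℝ c) (hd : Differentiable ℝ d)
    (Λ M : ℝ) (hΛM : Λ ≠ M)
    (hdev : ∀ u, c u + ((Λ - u) / (n : ℝ)) • deriv c u
               = d u + ((M - u) / (n : ℝ)) • deriv d u)
    (r : ℝ → Fin 3 → ℝ)
    (hr : ∀ u, r u = c u + ((u - M) / (Λ - M)) • (d u - c u)) :
    ∀ u, deriv r u = (((n : ℝ) + 1) / (Λ - M)) • (d u - c u) := by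
  intro u
  have hΛM' : Λ - M ≠ 0 := sub_ne_zero.mpr hΛM
  have hn0 : (n : ℝ) ≠ 0 := Nat.cast_ne_zero.mpr (by omega)
  have hs : HasDerivAt (fun u : ℝ => (u - M) / (Λ - M)) (1 / (Λ - M)) u := by
    have := ((hasDerivAt_id u).sub_const M).div_const (Λ - M)
    simpa using this
  have hcd : HasDerivAt (fun u => d u - c u) (deriv d u - deriv c u) u :=
    (hd u).hasDerivAt.sub (hc u).hasDerivAt
  have hg : HasDerivAt (fun u => c u + ((u - M) / (Λ - M)) • (d u - c u))
      (deriv c u + (((u - M) / (Λ - M)) • (deriv d u - deriv c u)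
        + (1 / (Λ - M)) • (d u - c u))) u :=
    (hc u).hasDerivAt.add (hs.smul hcd)
  have hreq : r = fun u => c u + ((u - M) / (Λ - M)) • (d u - c u) := funext hr
  have hr' : HasDerivAt r (deriv c u + (((u - M) / (Λ - M)) • (deriv d u - deriv c u)
        + (1 / (Λ - M)) • (d u - c u))) u := hreq ▸ hg
  rw [hr'.deriv]
  funext i
  have h := congrFun (hdev u) i
  simp only [Pi.add_apply, Pi.smul_apply, Pi.sub_apply, smul_eq_mul] at h ⊢
  field_simp at h ⊢
  ring_nf
  ring_nf at h
  nlinarith [h, sq_nonneg (Λ - M)]
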